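/- Let Ω ⊆ ℝⁿ be a bounded open set and let σ : Ω → ℝ be measurable with essinf σ > 0 and esssup σ < ∞, and suppose either σ ≥ 1 almost everywhere or σ ≤ 1 almost everywhere. Let D = esssupp(σ − 1), assume m(D) > 0, let ρ ∈ ℝⁿ be a unit vector, and let t < h_D(ρ). Then there exists a measurable set S ⊆ D such that: (1) m(S) > 0; (2) there is ε₁ > 0 with x·ρ > t + ε₁ for all x ∈ S; (3) there is ε₂ > 0 such that either σ(x) > 1 + ε₂ for all x ∈ S, or σ(x) + ε₂ < 1 for all x ∈ S. -/

import Mathlib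

open MeasureTheory Filter Set
open scoped RealInnerProductSpace Topology

noncomputable section

/-- The closed half-space `H_{ρ,t} = {x ∈ ℝⁿ : x·ρ ≤ t}`. -/
def halfSpace {n : ℕ} (ρ : EuclideanSpace ℝ (Fin n)) (t : ℝ) :
    Set (EuclideanSpace ℝ (Fin n)) :=
  {x | ⟪x, ρ⟫ ≤ t}

/-- The essential support of a measurable function `f` on `Ω`: the set `Ω` minus the
union of all open sets `O ⊆ Ω` on which `f = 0` almost everywhere. -/
def essSupport {n : ℕ} (Ω : Set (EuclideanSpace ℝ (Fin n)))
    (f : EuclideanSpace ℝ (Fin n) → ℝ) : Set (EuclideanSpace ℝ (Fin n)) :=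
  Ω \ ⋃ O ∈ {O : Set (EuclideanSpace ℝ (Fin n)) |
      IsOpen O ∧ O ⊆ Ω ∧ volume {x ∈ O | f x ≠ 0} = 0}, O

/-- The essential convex support function `h_A(ρ) = inf {t ∈ ℝ : m(A \ H_{ρ,t}) = 0}`. -/
def essSuppFn {n : ℕ} (A : Set (EuclideanSpace ℝ (Fin n)))
    (ρ : EuclideanSpace ℝ (Fin n)) : ℝ :=
  sInf {t : ℝ | volume (A \ halfSpace ρ t) = 0}

/-- The good-set lemma: if `σ ∈ L^∞_+(Ω)`, `σ ≥ 1` a.e. or `σ ≤ 1` a.e.,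
`D = esssupp(σ − 1)` has positive measure and `t < h_D(ρ)`, then there is a measurable
set `S ⊆ D` of positive measure on which `x·ρ > t + ε₁` and on which either
`σ > 1 + ε₂` or `σ + ε₂ < 1`, for some `ε₁, ε₂ > 0`. -/
theorem good_set_lemma {n : ℕ} (Ω : Set (EuclideanSpace ℝ (Fin n)))
    (hΩo : IsOpen Ω) (hΩb : Bornology.IsBounded Ω)
    (σ : EuclideanSpace ℝ (Fin n) → ℝ) (hσm : Measurable σ)
    (hlb : ∃ c : ℝ, 0 < c ∧ ∀ᵐ x ∂(volume.restrict Ω), c ≤ σ x)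
    (hub : ∃ C : ℝ, ∀ᵐ x ∂(volume.restrict Ω), σ x ≤ C)
    (hsign : (∀ᵐ x ∂(volume.restrict Ω), 1 ≤ σ x) ∨ (∀ᵐ x ∂(volume.restrict Ω), σ x ≤ 1))
    (hD : 0 < volume (essSupport Ω (fun x => σ x - 1)))
    (ρ : EuclideanSpace ℝ (Fin n)) (hρ : ‖ρ‖ = 1) (t : ℝ)
    (ht : t < essSuppFn (essSupport Ω (fun x => σ x - 1)) ρ) :
    ∃ S : Set (EuclideanSpace ℝ (Fin n)), MeasurableSet S ∧
      S ⊆ essSupport Ω (fun x => σ x - 1) ∧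
      0 < volume S ∧
      (∃ ε₁ : ℝ, 0 < ε₁ ∧ ∀ x ∈ S, t + ε₁ < ⟪x, ρ⟫) ∧
      (∃ ε₂ : ℝ, 0 < ε₂ ∧ ((∀ x ∈ S, 1 + ε₂ < σ x) ∨ (∀ x ∈ S, σ x + ε₂ < 1))) := by

  classical
  have hcont : Continuous fun x : EuclideanSpace ℝ (Fin n) => (⟪x, ρ⟫ : ℝ) :=
    continuous_id.inner continuous_const
  set f : EuclideanSpace ℝ (Fin n) → ℝ := fun x => σ x - 1 with hf
  set 𝒮 : Set (Set (EuclideanSpace ℝ (Fin n))) :=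
    {O : Set (EuclideanSpace ℝ (Fin n)) |
      IsOpen O ∧ O ⊆ Ω ∧ volume {x ∈ O | f x ≠ 0} = 0} with h𝒮
  have hDdef : essSupport Ω f = Ω \ ⋃₀ 𝒮 := by
    rw [essSupport, sUnion_eq_biUnion]
  set D := essSupport Ω f with hDD
  have hDsub : D ⊆ Ω := by rw [hDdef]; exact diff_subset
  have hDcompl : ∀ x ∈ Ω, x ∉ D → x ∈ ⋃₀ 𝒮 := by
    intro x hx hxD
    rw [hDdef] at hxD
    simp only [mem_diff, not_and, not_not] at hxD
    exact hxD hx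
  have hDnotin : ∀ x ∈ D, x ∉ ⋃₀ 𝒮 := by
    intro x hx
    rw [hDdef] at hx
    exact hx.2
  -- measurability bits
  have hΩm : MeasurableSet Ω := hΩo.measurableSet
  have hUopen : IsOpen (⋃₀ 𝒮) := isOpen_sUnion fun O hO => hO.1
  have hDm : MeasurableSet D := by
    rw [hDdef]; exact hΩm.diff hUopen.measurableSet
  -- bounded below
  obtain ⟨R, hR⟩ := hΩb.subset_closedBall 0
  have hBdd : BddBelow {s : ℝ | volume (D \ halfSpace ρ s) = 0} := by
    refine ⟨-(|R| + 1), fun s hs => ?_⟩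
    by_contra hlt
    push_neg at hlt
    simp only [mem_setOf_eq] at hs
    have hempty : D \ halfSpace ρ s = D := by
      refine subset_antisymm diff_subset fun x hxD => ⟨hxD, fun hxH => ?_⟩
      have hx1 : ‖x‖ ≤ R := by
        have := hR (hDsub hxD)
        simpa [Metric.mem_closedBall, dist_zero_right] using this
      have h2 : |⟪x, ρ⟫| ≤ ‖x‖ := by
        have := abs_real_inner_le_norm x ρ
        rwa [hρ, mul_one] at this
      have h3 : -(|R| + 1) ≤ ⟪x, ρ⟫ := by
        have : |⟪x, ρ⟫| ≤ |R| := le_trans h2 (le_trans hx1 (le_abs_self R))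
        linarith [neg_abs_le (⟪x, ρ⟫ : ℝ)]
      have hxs : (⟪x, ρ⟫ : ℝ) ≤ s := hxH
      linarith
    rw [hempty] at hs
    exact hD.ne' hs
  obtain ⟨t', ht1, ht2⟩ := exists_between ht
  have hA : volume (D \ halfSpace ρ t') ≠ 0 := by
    intro h0
    have : essSuppFn D ρ ≤ t' := csInf_le hBdd h0
    linarith
  -- the open set above the hyperplane
  set U : Set (EuclideanSpace ℝ (Fin n)) := Ω ∩ {x | t' < ⟪x, ρ⟫} with hU
  have hUopen' : IsOpen U := hΩo.inter (isOpen_lt continuous_const hcont)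
  have hUkey : volume {x ∈ U | f x ≠ 0} ≠ 0 := by
    intro h0
    have hU𝒮 : U ∈ 𝒮 := ⟨hUopen', inter_subset_left, h0⟩
    have : D \ halfSpace ρ t' = ∅ := by
      ext x
      simp only [mem_diff, mem_empty_iff_false, iff_false, not_and, not_not]
      intro hxD
      by_contra hxH
      exact absurd (⟨U, hU𝒮, hDsub hxD, show t' < ⟪x, ρ⟫ from not_le.mp hxH⟩ : x ∈ ⋃₀ 𝒮)
        (hDnotin x hxD)
    rw [this] at hA
    exact hA (measure_empty)
  -- Lindelöf: f = 0 a.e. outside D (within Ω)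
  have hNull : volume {x ∈ ⋃₀ 𝒮 | f x ≠ 0} = 0 := by
    obtain ⟨T, hTc, hT𝒮, hTU⟩ := TopologicalSpace.isOpen_sUnion_countable 𝒮 fun O hO => hO.1
    rw [← hTU]
    have heq : {x ∈ ⋃₀ T | f x ≠ 0} = ⋃ O ∈ T, {x ∈ O | f x ≠ 0} := by
      ext x
      simp only [mem_setOf_eq, mem_sUnion, mem_iUnion, exists_prop]
      tauto
    rw [heq]
    exact (measure_biUnion_null_iff hTc).mpr fun O hO => (hT𝒮 hO).2.2
  -- the good set B inside D
  set B : Set (EuclideanSpace ℝ (Fin n)) :=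
    {x ∈ D | t' < ⟪x, ρ⟫ ∧ σ x ≠ 1} with hB
  have hBpos : volume B ≠ 0 := by
    intro h0
    apply hUkey
    have hsub : {x ∈ U | f x ≠ 0} ⊆ B ∪ {x ∈ ⋃₀ 𝒮 | f x ≠ 0} := by
      rintro x ⟨⟨hxΩ, hxρ⟩, hxf⟩
      by_cases hxD : x ∈ D
      · exact Or.inl ⟨hxD, hxρ, sub_ne_zero.mp hxf⟩
      · exact Or.inr ⟨hDcompl x hxΩ hxD, hxf⟩
    have := (measure_mono hsub).trans_eq (measure_union_null h0 hNull)
    exact le_antisymm this zero_le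
  -- decompose by size of |σ - 1|
  have hcover : B ⊆ ⋃ k : ℕ, {x ∈ B | 1 / ((k : ℝ) + 1) < |σ x - 1|} := by
    intro x hx
    obtain ⟨k, hk⟩ := exists_nat_one_div_lt (abs_pos.mpr (sub_ne_zero.mpr hx.2.2))
    exact mem_iUnion.mpr ⟨k, hx, hk⟩
  have hEx : ∃ k : ℕ, volume {x ∈ B | 1 / ((k : ℝ) + 1) < |σ x - 1|} ≠ 0 := by
    by_contra h0
    push_neg at h0
    apply hBpos
    refine le_antisymm ((measure_mono hcover).trans_eq ?_) zero_le
    exact measure_iUnion_null h0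
  obtain ⟨k, hk⟩ := hEx
  set ε₂ : ℝ := 1 / ((k : ℝ) + 1) with hε₂def
  have hε₂ : 0 < ε₂ := by positivity
  set Sk : Set (EuclideanSpace ℝ (Fin n)) := {x ∈ B | ε₂ < |σ x - 1|} with hSk
  have hSkB : Sk ⊆ B := fun x hx => hx.1
  have hε₁ : (0:ℝ) < t' - t := by linarith
  have hmeasbase : MeasurableSet Sk := by
    have h1 : Sk = D ∩ {x | t' < ⟪x, ρ⟫} ∩ {x | ε₂ < |σ x - 1|} := by
      ext x
      simp only [hSk, hB, mem_setOf_eq, mem_inter_iff]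
      constructor
      · tauto
      · rintro ⟨⟨ha, hb⟩, hc⟩
        refine ⟨⟨ha, hb, fun h => ?_⟩, hc⟩
        rw [h] at hc
        simp at hc
        linarith
    rw [h1]
    refine (hDm.inter ?_).inter ?_
    · exact measurableSet_lt measurable_const hcont.measurable
    · exact measurableSet_lt measurable_const (hσm.sub measurable_const).abs
  rcases hsign with hsgn | hsgn
  · -- σ ≥ 1 a.e.
    have hnull2 : volume {x ∈ Ω | σ x < 1} = 0 := by
      have h1 := (ae_restrict_iff' hΩm).mp hsgn
      rw [ae_iff] at h1
      refine measure_mono_null ?_ h1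
      intro x ⟨hx1, hx2⟩
      simp only [mem_setOf_eq, not_forall]
      exact ⟨hx1, not_le.mpr hx2⟩
    refine ⟨Sk ∩ {x | 1 ≤ σ x}, hmeasbase.inter
      (measurableSet_le measurable_const hσm), ?_, ?_, ⟨t' - t, hε₁, ?_⟩,
      ⟨ε₂, hε₂, Or.inl ?_⟩⟩
    · exact fun x hx => (hSkB hx.1).1
    · rcases (show (0 : ENNReal) ≤ volume (Sk ∩ {x | 1 ≤ σ x}) from zero_le).lt_or_eq with h | h
      · exact h
      · exfalso
        apply hk
        have hsub : Sk ⊆ (Sk ∩ {x | 1 ≤ σ x}) ∪ {x ∈ Ω | σ x < 1} := by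
          intro x hx
          by_cases h1 : 1 ≤ σ x
          · exact Or.inl ⟨hx, h1⟩
          · exact Or.inr ⟨hDsub (hSkB hx).1, not_le.mp h1⟩
        refine le_antisymm ((measure_mono hsub).trans_eq
          (measure_union_null h.symm hnull2)) zero_le
    · intro x hx
      have := (hSkB hx.1).2.1
      linarith
    · rintro x ⟨hx, hx1⟩
      have h2 : ε₂ < |σ x - 1| := hx.2
      rw [abs_of_nonneg (by simp only [mem_setOf_eq] at hx1; linarith)] at h2
      linarith
  · -- σ ≤ 1 a.e.
    have hnull2 : volume {x ∈ Ω | 1 < σ x} = 0 := by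
      have h1 := (ae_restrict_iff' hΩm).mp hsgn
      rw [ae_iff] at h1
      refine measure_mono_null ?_ h1
      intro x ⟨hx1, hx2⟩
      simp only [mem_setOf_eq, not_forall]
      exact ⟨hx1, not_le.mpr hx2⟩
    refine ⟨Sk ∩ {x | σ x ≤ 1}, hmeasbase.inter
      (measurableSet_le hσm measurable_const), ?_, ?_, ⟨t' - t, hε₁, ?_⟩,
      ⟨ε₂, hε₂, Or.inr ?_⟩⟩
    · exact fun x hx => (hSkB hx.1).1
    · rcases (show (0 : ENNReal) ≤ volume (Sk ∩ {x | σ x ≤ 1}) from zero_le).lt_or_eq with h | h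
      · exact h
      · exfalso
        apply hk
        have hsub : Sk ⊆ (Sk ∩ {x | σ x ≤ 1}) ∪ {x ∈ Ω | 1 < σ x} := by
          intro x hx
          by_cases h1 : σ x ≤ 1
          · exact Or.inl ⟨hx, h1⟩
          · exact Or.inr ⟨hDsub (hSkB hx).1, not_le.mp h1⟩
        refine le_antisymm ((measure_mono hsub).trans_eq
          (measure_union_null h.symm hnull2)) zero_le
    · intro x hx
      have := (hSkB hx.1).2.1
      linarith
    · rintro x ⟨hx, hx1⟩
      have h2 : ε₂ < |σ x - 1| := hx.2
      rw [abs_of_nonpos (by simp only [mem_setOf_eq] at hx1; linarith)] at h2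
      linarith
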